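/- Let θ: M → Aut(A) be a monoid action and φ: M → A a bijective 1-cocycle with respect to θ. Set 𝒢 = θ(M) ⊆ Aut(A). Then the map f: M → A ⋊ 𝒢 defined by f(x) = (φ(x), θ(x)) is an injective monoid homomorphism, and its image equals {(a, ϕ(a)) : a ∈ A}, where ϕ = θ ∘ φ^{-1}: A → 𝒢 satisfies ϕ(a)ϕ(b) = ϕ(a·ϕ(a)(b)) for all a,b ∈ A. -/
import Mathlib


/-- The semidirect product `A ⋊ Aut(A)` of a monoid `A` with its automorphism group,
with multiplication `(a, g)(b, h) = (a · g(b), g h)`.  A submonoid `𝒢 = θ(M)` of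
`Aut(A)` yields the semidirect product `A ⋊ 𝒢` inside it. -/
structure MonoidSDP (A : Type*) [Monoid A] where
  fst : A
  snd : MulAut A

namespace MonoidSDP

variable {A : Type*} [Monoid A]

instance : Monoid (MonoidSDP A) where
  mul p q := ⟨p.fst * p.snd q.fst, p.snd * q.snd⟩
  one := ⟨1, 1⟩
  mul_assoc := by
    rintro ⟨a, g⟩ ⟨b, h⟩ ⟨c, k⟩
    refine congrArg₂ MonoidSDP.mk ?_ (mul_assoc g h k)
    show (a * g b) * (g * h) c = a * g (b * h c)
    simp [MulAut.mul_apply, map_mul, mul_assoc]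
  one_mul := by
    rintro ⟨a, g⟩
    refine congrArg₂ MonoidSDP.mk ?_ (one_mul g)
    show 1 * (1 : MulAut A) a = a
    simp
  mul_one := by
    rintro ⟨a, g⟩
    refine congrArg₂ MonoidSDP.mk ?_ (mul_one g)
    show a * g 1 = a
    simp

theorem mul_def (p q : MonoidSDP A) :
    p * q = ⟨p.fst * p.snd q.fst, p.snd * q.snd⟩ := rfl

theorem one_def : (1 : MonoidSDP A) = ⟨1, 1⟩ := rfl

end MonoidSDP

theorem stmt6 {M A : Type*} [Monoid M] [Monoid A]
    (θ : M →* MulAut A) (φ : M → A)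
    (hφbij : Function.Bijective φ) (hφ1 : φ 1 = 1)
    (hcoc : ∀ x y : M, φ (x * y) = φ x * θ x (φ y)) :
    ∃ (f : M →* MonoidSDP A) (ϕ : A → MulAut A),
      (∀ x : M, f x = ⟨φ x, θ x⟩) ∧
      Function.Injective f ∧
      (∀ x : M, ϕ (φ x) = θ x) ∧
      (Set.range f = {p : MonoidSDP A | ∃ a : A, p = ⟨a, ϕ a⟩}) ∧
      (∀ a b : A, ϕ a * ϕ b = ϕ (a * ϕ a b)) := by
  let e := Equiv.ofBijective φ hφbij
  have hsymm : ∀ x : M, e.symm (φ x) = x := fun x => e.symm_apply_apply x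
  have happ : ∀ a : A, φ (e.symm a) = a := fun a => e.apply_symm_apply a
  refine ⟨{ toFun := fun x => ⟨φ x, θ x⟩,
            map_one' := by simp [hφ1, MonoidSDP.one_def],
            map_mul' := fun x y => by
              simp [MonoidSDP.mul_def, hcoc, map_mul] },
          fun a => θ (e.symm a), fun x => rfl, ?_, ?_, ?_, ?_⟩
  · intro x y h
    have : φ x = φ y := congrArg MonoidSDP.fst h
    exact hφbij.1 this
  · intro x; show θ (e.symm (φ x)) = θ x; rw [hsymm]
  · ext p
    constructor
    · rintro ⟨x, rfl⟩
      exact ⟨φ x, by simp [hsymm]⟩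
    · rintro ⟨a, rfl⟩
      exact ⟨e.symm a, by simp [happ]⟩
  · intro a b
    rw [← map_mul]
    congr 1
    apply hφbij.1
    rw [happ, hcoc, happ, happ]
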